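/- For k = 1, …, n let P_k be a Lebesgue measurable subset of □, and let f_1, f_2 : Ω × □^n × ℝ^m → [0,∞) be functions such that for j = 1, 2: f_j(x, ·, ·) is continuous on □^n × ℝ^m for every x ∈ Ω, and f_j(·, y, z) is Lebesgue measurable on Ω for every (y, z). Define f(x, y¹, …, yⁿ, z) := (∏_{k=1}^n χ_{P_k}(y^k)) f_1(x, y¹, …, yⁿ, z) + (1 − ∏_{k=1}^n χ_{P_k}(y^k)) f_2(x, y¹, …, yⁿ, z). Then f is an admissible integrand. -/

import Mathlib

open MeasureTheory Filter Topology

/-- The unit cell `□ = [0,1)^d` in `ℝ^d`. -/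
def unitCell (d : ℕ) : Set (Fin d → ℝ) := Set.univ.pi fun _ => Set.Ico (0 : ℝ) 1

/-- The `n`-fold product `□^n` of unit cells. -/
def unitCellPow (d n : ℕ) : Set (Fin n → Fin d → ℝ) := Set.univ.pi fun _ => unitCell d

/-- A function `f : Ω × □^n × ℝ^m → [0,∞)` is an *admissible integrand* if for every
`δ > 0` there are compact sets `X ⊆ Ω` and `Y ⊆ □` whose complements have measure at
most `δ` such that the restriction of `f` to `X × Y^n × ℝ^m` is continuous. -/
def AdmissibleIntegrand {d n m : ℕ} (Ω : Set (Fin d → ℝ))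
    (f : (Fin d → ℝ) → (Fin n → Fin d → ℝ) → (Fin m → ℝ) → ℝ) : Prop :=
  ∀ δ > (0 : ℝ), ∃ X : Set (Fin d → ℝ),
    IsCompact X ∧ X ⊆ Ω ∧ volume (Ω \ X) ≤ ENNReal.ofReal δ ∧
    ∃ Y : Set (Fin d → ℝ),
      IsCompact Y ∧ Y ⊆ unitCell d ∧ volume (unitCell d \ Y) ≤ ENNReal.ofReal δ ∧
      ContinuousOn
        (fun p : (Fin d → ℝ) × (Fin n → Fin d → ℝ) × (Fin m → ℝ) => f p.1 p.2.1 p.2.2)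
        (X ×ˢ (Set.univ.pi fun _ => Y) ×ˢ Set.univ)

open Set
open scoped ENNReal NNReal

-- geometric helpers
lemma geom_aux (c : ℝ≥0∞) : ∑' n : ℕ, c * 2⁻¹ ^ (n + 1) = c := by
  rw [ENNReal.tsum_mul_left, ENNReal.tsum_geometric_add_one]
  have : (1 : ℝ≥0∞) - 2⁻¹ = 2⁻¹ := by
    rw [ENNReal.sub_eq_of_eq_add (by simp)]
    rw [ENNReal.inv_two_add_inv_two]
  rw [this, inv_inv, ENNReal.inv_mul_cancel (by simp) (by simp), mul_one]

lemma ofReal_geom_aux {ε : ℝ} (hε : 0 ≤ ε) :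
    ∑' n : ℕ, ENNReal.ofReal (ε / 2 ^ (n + 1)) ≤ ENNReal.ofReal ε := by
  have : ∀ n : ℕ, ENNReal.ofReal (ε / 2 ^ (n + 1)) = ENNReal.ofReal ε * 2⁻¹ ^ (n + 1) := by
    intro n
    rw [div_eq_mul_inv, ENNReal.ofReal_mul hε, ← inv_pow,
      ENNReal.ofReal_pow (by norm_num), ENNReal.ofReal_inv_of_pos (by norm_num)]
    norm_num
  simp_rw [this]
  exact le_of_eq (geom_aux _)

/-- A function constant on each member of a finite family of pairwise disjoint
closed sets is continuous on the union. -/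
lemma continuousOn_of_piecewise_const {α β ι : Type*} [TopologicalSpace α] [TopologicalSpace β]
    (s : Finset ι) (K : ι → Set α) (hcl : ∀ i ∈ s, IsClosed (K i))
    (f : α → β) (c : ι → β) (hconst : ∀ i ∈ s, ∀ x ∈ K i, f x = c i)
    (hdisj : ∀ i ∈ s, ∀ j ∈ s, i ≠ j → K i ∩ K j = ∅) :
    ContinuousOn f (⋃ i ∈ s, K i) := by
  classical
  intro x hx
  simp only [mem_iUnion] at hx
  obtain ⟨i, hi, hxi⟩ := hx
  set U : Set α := (⋃ j ∈ s.erase i, K j)ᶜ with hU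
  have hUopen : IsOpen U := by
    apply isOpen_compl_iff.mpr
    exact isClosed_biUnion_finset fun j hj => hcl j (Finset.mem_of_mem_erase hj)
  have hxU : x ∈ U := by
    simp only [hU, mem_compl_iff, mem_iUnion, not_exists]
    rintro j hj hxj
    have hne : i ≠ j := fun h => (Finset.ne_of_mem_erase hj) h.symm
    have := hdisj i hi j (Finset.mem_of_mem_erase hj) hne
    exact absurd (mem_inter hxi hxj) (by simp [this])
  have hev : f =ᶠ[𝓝[⋃ j ∈ s, K j] x] fun _ => c i := by
    filter_upwards [self_mem_nhdsWithin,
      mem_nhdsWithin_of_mem_nhds (hUopen.mem_nhds hxU)] with y hy hyU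
    simp only [mem_iUnion] at hy
    obtain ⟨j, hj, hyj⟩ := hy
    rcases eq_or_ne j i with rfl | hne
    · exact hconst j hj y hyj
    · exact absurd hyj (by
        simp only [hU, mem_compl_iff, mem_iUnion, not_exists] at hyU
        exact hyU j (Finset.mem_erase.mpr ⟨hne, hj⟩))
  exact (continuousWithinAt_const (b := c i)).congr_of_eventuallyEq hev (hconst i hi x hxi)

section Lusin

variable {α : Type*} [MeasurableSpace α] [TopologicalSpace α] [T2Space α]
  [OpensMeasurableSpace α] {μ : Measure α} [μ.InnerRegularCompactLTTop]

/-- A simple function is continuous outside a set of arbitrarily small measure. -/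
lemma simpleFunc_lusin {E : Type*} [MetricSpace E] [MeasurableSpace E] [BorelSpace E]
    (s : SimpleFunc α E) {A : Set α} (hA : MeasurableSet A) (hfin : μ A ≠ ⊤)
    {ε : ℝ≥0∞} (hε : ε ≠ 0) :
    ∃ C, IsCompact C ∧ C ⊆ A ∧ μ (A \ C) ≤ ε ∧ ContinuousOn s C := by
  classical
  set N : ℕ := s.range.card with hN
  set η : ℝ≥0∞ := ε / N with hη
  have hη0 : η ≠ 0 := by
    simp [hη, ENNReal.div_eq_zero_iff, hε]
  have hB : ∀ c : E, MeasurableSet (s ⁻¹' {c} ∩ A) := fun c =>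
    (s.measurableSet_fiber c).inter hA
  have hBfin : ∀ c : E, μ (s ⁻¹' {c} ∩ A) ≠ ⊤ := fun c =>
    (lt_of_le_of_lt (measure_mono inter_subset_right) hfin.lt_top).ne
  choose Kc hKcsub hKccomp hKcmeas using fun c : E =>
    (hB c).exists_isCompact_diff_lt (hBfin c) hη0
  refine ⟨⋃ c ∈ s.range, Kc c, ?_, ?_, ?_, ?_⟩
  · exact s.range.finite_toSet.isCompact_biUnion fun c _ => hKccomp c
  · exact iUnion₂_subset fun c _ => (hKcsub c).trans inter_subset_right
  · have hsub : A \ (⋃ c ∈ s.range, Kc c) ⊆ ⋃ c ∈ s.range, (s ⁻¹' {c} ∩ A) \ Kc c := by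
      rintro x ⟨hxA, hxC⟩
      simp only [mem_iUnion, not_exists] at hxC
      refine mem_iUnion₂.mpr ⟨s x, s.mem_range_self x, ⟨⟨rfl, hxA⟩, hxC _ (s.mem_range_self x)⟩⟩
    calc μ (A \ ⋃ c ∈ s.range, Kc c) ≤ ∑ c ∈ s.range, μ ((s ⁻¹' {c} ∩ A) \ Kc c) :=
          (measure_mono hsub).trans (measure_biUnion_finset_le _ _)
      _ ≤ ∑ _c ∈ s.range, η := Finset.sum_le_sum fun c _ => (hKcmeas c).le
      _ = N * η := by rw [Finset.sum_const, hN, nsmul_eq_mul]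
      _ ≤ ε := by rw [hη]; exact ENNReal.mul_div_le
  · refine continuousOn_of_piecewise_const s.range Kc (fun c _ => (hKccomp c).isClosed)
      s (fun c => c) (fun c _ x hx => ((hKcsub c) hx).1) ?_
    intro c _ c' _ hne
    refine eq_empty_of_forall_notMem fun x hx => hne ?_
    have h1 := ((hKcsub c) hx.1).1
    have h2 := ((hKcsub c') hx.2).1
    simp only [mem_preimage, mem_singleton_iff] at h1 h2
    rw [← h1, ← h2]

/-- Lusin's theorem for strongly measurable maps into a metric space. -/
lemma lusin_stronglyMeasurable {E : Type*} [MetricSpace E]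
    {A : Set α} (hA : MeasurableSet A) (hfin : μ A ≠ ⊤)
    {F : α → E} (hF : StronglyMeasurable F) {ε : ℝ≥0∞} (hε : ε ≠ 0) :
    ∃ X, IsCompact X ∧ X ⊆ A ∧ μ (A \ X) ≤ ε ∧ ContinuousOn F X := by
  borelize E
  haveI : IsFiniteMeasure (μ.restrict A) :=
    ⟨by rwa [Measure.restrict_apply_univ, lt_top_iff_ne_top]⟩
  -- a real number below ε/2
  obtain ⟨e, he0, hee⟩ : ∃ e : ℝ, 0 < e ∧ ENNReal.ofReal e ≤ ε / 2 := by
    rcases eq_or_ne (ε / 2) ⊤ with h | h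
    · exact ⟨1, one_pos, by simp [h]⟩
    · have hpos : 0 < ε / 2 := ENNReal.div_pos hε (by simp)
      exact ⟨(ε / 2).toReal, ENNReal.toReal_pos hpos.ne' h,
        by rw [ENNReal.ofReal_toReal h]⟩
  obtain ⟨t, htm, htμ, htu⟩ := tendstoUniformlyOn_of_ae_tendsto'
    (μ := μ.restrict A) (fun n => (hF.approx n).stronglyMeasurable) hF
    (Eventually.of_forall fun x => hF.tendsto_approx x) he0
  set A' : Set α := A \ t with hA'
  have hA'm : MeasurableSet A' := hA.diff htm
  have hA'fin : μ A' ≠ ⊤ := (lt_of_le_of_lt (measure_mono diff_subset) hfin.lt_top).ne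
  have hεn : ∀ i : ℕ, (ε / 2) * 2⁻¹ ^ (i + 1) ≠ 0 := fun i =>
    mul_ne_zero (ENNReal.div_pos hε (by simp)).ne' (pow_ne_zero _ (by simp))
  choose C hCcomp hCsub hCmeas hCcont using fun i : ℕ =>
    simpleFunc_lusin (hF.approx i) hA'm hA'fin (hεn i)
  refine ⟨⋂ i, C i, ?_, ?_, ?_, ?_⟩
  · exact (hCcomp 0).of_isClosed_subset (isClosed_iInter fun i => (hCcomp i).isClosed)
      (iInter_subset _ 0)
  · exact (iInter_subset _ 0).trans ((hCsub 0).trans diff_subset)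
  · have hsub : A \ (⋂ i, C i) ⊆ (t ∩ A) ∪ ⋃ i, A' \ C i := by
      rintro x ⟨hxA, hxX⟩
      by_cases hxt : x ∈ t
      · exact Or.inl ⟨hxt, hxA⟩
      · simp only [mem_iInter, not_forall] at hxX
        obtain ⟨i, hi⟩ := hxX
        exact Or.inr (mem_iUnion.mpr ⟨i, ⟨hxA, hxt⟩, hi⟩)
    calc μ (A \ ⋂ i, C i) ≤ μ (t ∩ A) + μ (⋃ i, A' \ C i) :=
          (measure_mono hsub).trans (measure_union_le _ _)
      _ ≤ ε / 2 + ∑' i, μ (A' \ C i) := by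
          gcongr
          · rw [← Measure.restrict_apply htm] at *
            exact htμ.trans hee
          · exact measure_iUnion_le _
      _ ≤ ε / 2 + ∑' i, (ε / 2) * 2⁻¹ ^ (i + 1) := by
          gcongr with i; exact hCmeas i
      _ = ε / 2 + ε / 2 := by rw [geom_aux]
      _ = ε := ENNReal.add_halves ε
  · refine (htu.mono ?_).continuousOn (Eventually.of_forall fun i => (hCcont i).mono ?_).frequently
    · exact (iInter_subset _ 0).trans <| (hCsub 0).trans fun x hx => hx.2
    · exact iInter_subset _ i

end Lusin

section CK

variable {α γ : Type*} [MeasurableSpace α] [MetricSpace γ] [SecondCountableTopology γ]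

/-- A Carathéodory function gives a strongly measurable map into `C(K, ℝ)`. -/
lemma stronglyMeasurable_restrictCM {K : Set γ} (hK : IsCompact K)
    {D : Set ↥K} (hDc : D.Countable) (hDd : Dense D)
    {f : α → γ → ℝ} (hf : ∀ x, ContinuousOn (f x) K)
    (hm : ∀ p ∈ D, Measurable fun x => f x ↑p) :
    StronglyMeasurable fun x => (ContinuousMap.mk _ ((hf x).restrict) : C(↥K, ℝ)) := by
  haveI : CompactSpace ↥K := isCompact_iff_compactSpace.mp hK
  borelize C(↥K, ℝ)
  set F : α → C(↥K, ℝ) := fun x => ContinuousMap.mk _ ((hf x).restrict) with hFdef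
  suffices h : Measurable F by exact h.stronglyMeasurable
  have hball : ∀ (g : C(↥K, ℝ)) (r : ℝ), MeasurableSet (F ⁻¹' Metric.ball g r) := by
    intro g r
    have hset : F ⁻¹' Metric.ball g r =
        ⋃ q : ℚ, ⋃ (_ : 0 ≤ (q : ℝ) ∧ (q : ℝ) < r),
          ⋂ p ∈ D, {x | dist (f x ↑p) (g p) ≤ (q : ℝ)} := by
      ext x
      simp only [mem_preimage, Metric.mem_ball, mem_iUnion, mem_iInter, mem_setOf_eq]
      constructor
      · intro hd
        obtain ⟨q, hq1, hq2⟩ := exists_rat_btwn hd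
        refine ⟨q, ⟨(dist_nonneg.trans_lt hq1).le, hq2⟩, fun p hp => ?_⟩
        calc dist (f x ↑p) (g p) = dist (F x p) (g p) := rfl
          _ ≤ dist (F x) g := ContinuousMap.dist_apply_le_dist p
          _ ≤ q := hq1.le
      · rintro ⟨q, ⟨hq0, hqr⟩, hq⟩
        have hall : ∀ p : ↥K, dist (F x p) (g p) ≤ (q : ℝ) := by
          have hcl : IsClosed {p : ↥K | dist (F x p) (g p) ≤ (q : ℝ)} :=
            isClosed_le ((F x).continuous.dist g.continuous) continuous_const
          have hsubD : D ⊆ {p : ↥K | dist (F x p) (g p) ≤ (q : ℝ)} := fun p hp => hq p hp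
          have := hcl.closure_subset_iff.mpr hsubD
          intro p
          exact this (hDd.closure_eq ▸ mem_univ p : p ∈ closure D)
        exact lt_of_le_of_lt ((ContinuousMap.dist_le hq0).mpr hall) hqr
    rw [hset]
    refine MeasurableSet.iUnion fun q => MeasurableSet.iUnion fun _ =>
      MeasurableSet.biInter hDc fun p hp =>
        measurableSet_le ((hm p hp).dist measurable_const) measurable_const
  apply measurable_of_isOpen
  intro O hO
  obtain ⟨T, hTc, hTd⟩ := TopologicalSpace.exists_countable_dense C(↥K, ℝ)
  have hdecomp : O = ⋃ g ∈ T, ⋃ q : ℚ, ⋃ (_ : Metric.ball g (q : ℝ) ⊆ O),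
      Metric.ball g (q : ℝ) := by
    apply Subset.antisymm
    · intro h hh
      obtain ⟨r, hr0, hrsub⟩ := Metric.isOpen_iff.mp hO h hh
      obtain ⟨g, hgT, hgd⟩ := hTd.exists_dist_lt h (by positivity : (0:ℝ) < r / 3)
      obtain ⟨q, hq1, hq2⟩ := exists_rat_btwn (by linarith : r / 3 < 2 * r / 3)
      refine mem_biUnion hgT (mem_iUnion.mpr ⟨q, mem_iUnion.mpr ⟨?_, ?_⟩⟩)
      · intro y hy
        apply hrsub
        have : dist y h ≤ dist y g + dist g h := dist_triangle _ _ _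
        have hgd' : dist g h < r / 3 := by rw [dist_comm]; exact hgd
        rw [Metric.mem_ball] at hy ⊢
        linarith
      · rw [Metric.mem_ball]
        linarith
    · exact iUnion₂_subset fun g _ => iUnion₂_subset fun q hq => hq
  rw [hdecomp]
  simp only [preimage_iUnion]
  exact MeasurableSet.biUnion hTc fun g _ => MeasurableSet.iUnion fun q =>
    MeasurableSet.iUnion fun _ => hball g q

end CK

lemma unitCell_isBounded (d : ℕ) : Bornology.IsBounded (unitCell d) := by
  apply (Metric.isBounded_closedBall (x := (0 : Fin d → ℝ)) (r := 1)).subset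
  intro y hy
  rw [Metric.mem_closedBall, dist_pi_le_iff zero_le_one]
  intro i
  have h := hy i (Set.mem_univ i)
  simp only [Pi.zero_apply]
  rw [Real.dist_0_eq_abs, abs_le]
  constructor <;> [linarith [h.1]; linarith [h.2]]

lemma unitCell_measurableSet (d : ℕ) : MeasurableSet (unitCell d) :=
  MeasurableSet.univ_pi fun _ => measurableSet_Ico

/-- Scorza–Dragoni: a Carathéodory integrand restricted to a compact `X × Y^n × ℝ^m`. -/
lemma scorza_dragoni {d n m : ℕ} {Ω : Set (Fin d → ℝ)} (hΩm : MeasurableSet Ω)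
    (hfin : volume Ω ≠ ⊤) {Y : Set (Fin d → ℝ)} (hYc : IsCompact Y) (hYsub : Y ⊆ unitCell d)
    {f : (Fin d → ℝ) → (Fin n → Fin d → ℝ) → (Fin m → ℝ) → ℝ}
    (hfc : ∀ x ∈ Ω, ContinuousOn (fun p : (Fin n → Fin d → ℝ) × (Fin m → ℝ) => f x p.1 p.2)
      (unitCellPow d n ×ˢ Set.univ))
    (hfm : ∀ y ∈ unitCellPow d n, ∀ z : Fin m → ℝ,
      AEMeasurable (fun x => f x y z) (volume.restrict Ω))
    {δ : ℝ} (hδ : 0 < δ) :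
    ∃ X, IsCompact X ∧ X ⊆ Ω ∧ volume (Ω \ X) ≤ ENNReal.ofReal δ ∧
      ContinuousOn (fun p : (Fin d → ℝ) × (Fin n → Fin d → ℝ) × (Fin m → ℝ) =>
        f p.1 p.2.1 p.2.2) (X ×ˢ (Set.univ.pi fun _ => Y) ×ˢ Set.univ) := by
  classical
  set S : Set (Fin n → Fin d → ℝ) := Set.univ.pi fun _ => Y with hSdef
  set K : ℕ → Set ((Fin n → Fin d → ℝ) × (Fin m → ℝ)) :=
    fun R => S ×ˢ Metric.closedBall (0 : Fin m → ℝ) R with hKdef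
  have hKcomp : ∀ R, IsCompact (K R) := fun R =>
    (isCompact_univ_pi fun _ => hYc).prod (isCompact_closedBall _ _)
  have hSsub : S ⊆ unitCellPow d n := fun y hy i _ => hYsub (hy i (Set.mem_univ i))
  have hKsub : ∀ R, K R ⊆ unitCellPow d n ×ˢ (Set.univ : Set (Fin m → ℝ)) :=
    fun R p hp => ⟨hSsub hp.1, Set.mem_univ _⟩
  have hDex : ∀ R : ℕ, ∃ D : Set ↥(K R), D.Countable ∧ Dense D := fun R =>
    let ⟨D, hc, hd⟩ := TopologicalSpace.exists_countable_dense ↥(K R); ⟨D, hc, hd⟩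
  choose D hDc hDd using hDex
  have hmk : ∀ R : ℕ, ∀ p : ↥(K R), ∃ g : (Fin d → ℝ) → ℝ, Measurable g ∧
      ∀ᵐ x ∂(volume.restrict Ω), f x (↑p : (Fin n → Fin d → ℝ) × (Fin m → ℝ)).1 (↑p : (Fin n → Fin d → ℝ) × (Fin m → ℝ)).2 = g x := by
    intro R p
    have h1 := (hKsub R p.2).1
    obtain hm := hfm _ h1 (↑p : (Fin n → Fin d → ℝ) × (Fin m → ℝ)).2
    exact ⟨hm.mk _, hm.measurable_mk, hm.ae_eq_mk⟩
  choose g hgm hgae using hmk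
  have hae : ∀ᵐ x ∂(volume.restrict Ω), ∀ R : ℕ, ∀ p ∈ D R,
      f x (↑p : (Fin n → Fin d → ℝ) × (Fin m → ℝ)).1 (↑p : (Fin n → Fin d → ℝ) × (Fin m → ℝ)).2 = g R p x := by
    rw [ae_all_iff]
    intro R
    rw [ae_ball_iff (hDc R)]
    exact fun p hp => hgae R p
  obtain ⟨M, hMsup, hMm, hM0⟩ := exists_measurable_superset_of_null (ae_iff.mp hae)
  set Ω' : Set (Fin d → ℝ) := Ω \ M with hΩ'def
  have hΩ'm : MeasurableSet Ω' := hΩm.diff hMm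
  have hΩ'fin : volume Ω' ≠ ⊤ := ((measure_mono Set.diff_subset).trans_lt hfin.lt_top).ne
  have hΩ'good : ∀ x ∈ Ω', ∀ R : ℕ, ∀ p ∈ D R,
      f x (↑p : (Fin n → Fin d → ℝ) × (Fin m → ℝ)).1 (↑p : (Fin n → Fin d → ℝ) × (Fin m → ℝ)).2 = g R p x := by
    intro x hx
    by_contra hcon
    exact hx.2 (hMsup hcon)
  have hΩ'null : volume (Ω \ Ω') = 0 := by
    have : Ω \ Ω' = M ∩ Ω := by
      rw [hΩ'def, Set.diff_diff_right_self, Set.inter_comm]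
    rw [this, ← Measure.restrict_apply hMm]
    exact hM0
  set fb : (Fin d → ℝ) → (Fin n → Fin d → ℝ) × (Fin m → ℝ) → ℝ :=
    fun x p => if x ∈ Ω' then f x p.1 p.2 else 0 with hfbdef
  have hfbc : ∀ R : ℕ, ∀ x, ContinuousOn (fb x) (K R) := by
    intro R x
    by_cases hx : x ∈ Ω'
    · have h1 : ContinuousOn (fun p : (Fin n → Fin d → ℝ) × (Fin m → ℝ) => f x p.1 p.2) (K R) :=
        (hfc x hx.1).mono (hKsub R)
      exact h1.congr fun p _ => by simp [hfbdef, hx]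
    · exact (continuousOn_const (c := (0:ℝ))).congr fun p _ => by simp [hfbdef, hx]
  have hfbm : ∀ R : ℕ, ∀ p ∈ D R, Measurable fun x => fb x ↑p := by
    intro R p hp
    have heq : (fun x => fb x ↑p) = fun x => if x ∈ Ω' then g R p x else 0 := by
      funext x
      by_cases hx : x ∈ Ω'
      · simp only [hfbdef, if_pos hx]
        exact hΩ'good x hx R p hp
      · simp [hfbdef, hx]
    rw [heq]
    exact Measurable.ite hΩ'm (hgm R p) measurable_const
  have hF : ∀ R : ℕ, StronglyMeasurable fun x =>
      (ContinuousMap.mk _ ((hfbc R x).restrict) : C(↥(K R), ℝ)) :=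
    fun R => stronglyMeasurable_restrictCM (hKcomp R) (hDc R) (hDd R) (hfbc R) (hfbm R)
  have hεR : ∀ R : ℕ, (ENNReal.ofReal (δ / 2 / 2 ^ (R + 1))) ≠ 0 := fun R => by
    rw [ne_eq, ENNReal.ofReal_eq_zero, not_le]
    positivity
  have hlus : ∀ R : ℕ, ∃ X, IsCompact X ∧ X ⊆ Ω' ∧
      volume (Ω' \ X) ≤ ENNReal.ofReal (δ / 2 / 2 ^ (R + 1)) ∧
      ContinuousOn (fun x => (ContinuousMap.mk _ ((hfbc R x).restrict) : C(↥(K R), ℝ))) X := by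
    intro R
    haveI : CompactSpace ↥(K R) := isCompact_iff_compactSpace.mp (hKcomp R)
    exact lusin_stronglyMeasurable hΩ'm hΩ'fin (hF R) (hεR R)
  choose XR hXRcomp hXRsub hXRmeas hXRcont using hlus
  have hXΩ' : (⋂ R, XR R) ⊆ Ω' := (Set.iInter_subset _ 0).trans (hXRsub 0)
  have hcontR : ∀ R : ℕ, ContinuousOn
      (fun q : (Fin d → ℝ) × (Fin n → Fin d → ℝ) × (Fin m → ℝ) => f q.1 q.2.1 q.2.2)
      ((⋂ R', XR R') ×ˢ K R) := by
    intro R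
    haveI : CompactSpace ↥(K R) := isCompact_iff_compactSpace.mp (hKcomp R)
    have h1 : ContinuousOn (fun q : (Fin d → ℝ) × ((Fin n → Fin d → ℝ) × (Fin m → ℝ)) =>
        fb q.1 q.2) ((XR R) ×ˢ K R) := by
      rw [continuousOn_iff_continuous_restrict]
      have hFc : Continuous ((XR R).restrict fun x =>
          (ContinuousMap.mk _ ((hfbc R x).restrict) : C(↥(K R), ℝ))) :=
        continuousOn_iff_continuous_restrict.mp (hXRcont R)
      have he : Continuous fun q : ↥((XR R) ×ˢ K R) =>
          (((XR R).restrict fun x => (ContinuousMap.mk _ ((hfbc R x).restrict) : C(↥(K R), ℝ)))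
              ⟨q.val.1, q.2.1⟩,
            (⟨q.val.2, q.2.2⟩ : ↥(K R))) := by
        refine Continuous.prodMk (hFc.comp ?_) ?_
        · exact Continuous.subtype_mk (continuous_fst.comp continuous_subtype_val) _
        · exact Continuous.subtype_mk (continuous_snd.comp continuous_subtype_val) _
      exact ContinuousEval.continuous_eval.comp he
    have h2 : ContinuousOn (fun q : (Fin d → ℝ) × ((Fin n → Fin d → ℝ) × (Fin m → ℝ)) =>
        f q.1 q.2.1 q.2.2) ((XR R) ×ˢ K R) :=
      h1.congr fun q hq => by simp [hfbdef, (hXRsub R hq.1 : q.1 ∈ Ω')]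
    exact h2.mono (Set.prod_mono (Set.iInter_subset _ R) subset_rfl)
  refine ⟨⋂ R, XR R, ?_, ?_, ?_, ?_⟩
  · exact (hXRcomp 0).of_isClosed_subset (isClosed_iInter fun R => (hXRcomp R).isClosed)
      (Set.iInter_subset _ 0)
  · exact hXΩ'.trans Set.diff_subset
  · have hsub : Ω \ (⋂ R, XR R) ⊆ (Ω \ Ω') ∪ ⋃ R, Ω' \ XR R := by
      rintro x ⟨hxA, hxX⟩
      by_cases hx' : x ∈ Ω'
      · simp only [Set.mem_iInter, not_forall] at hxX
        obtain ⟨R, hR⟩ := hxX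
        exact Or.inr (Set.mem_iUnion.mpr ⟨R, hx', hR⟩)
      · exact Or.inl ⟨hxA, hx'⟩
    calc volume (Ω \ ⋂ R, XR R) ≤ volume (Ω \ Ω') + volume (⋃ R, Ω' \ XR R) :=
          (measure_mono hsub).trans (measure_union_le _ _)
      _ ≤ 0 + ∑' R, volume (Ω' \ XR R) := by rw [hΩ'null]; gcongr; exact measure_iUnion_le _
      _ ≤ ∑' R : ℕ, ENNReal.ofReal (δ / 2 / 2 ^ (R + 1)) := by
          rw [zero_add]; exact ENNReal.tsum_le_tsum fun R => hXRmeas R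
      _ ≤ ENNReal.ofReal (δ / 2) := ofReal_geom_aux (by positivity)
      _ ≤ ENNReal.ofReal δ := ENNReal.ofReal_le_ofReal (by linarith)
  · intro a ha
    obtain ⟨R, hR⟩ := exists_nat_gt ‖a.2.2‖
    have hU : (Set.univ ×ˢ Set.univ ×ˢ Metric.ball (0 : Fin m → ℝ) R) ∈ 𝓝 a := by
      refine IsOpen.mem_nhds (isOpen_univ.prod (isOpen_univ.prod Metric.isOpen_ball)) ?_
      exact ⟨Set.mem_univ _, Set.mem_univ _, by simpa [mem_ball_zero_iff] using hR⟩
    rw [← continuousWithinAt_inter hU]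
    have hamem : a ∈ (⋂ R', XR R') ×ˢ K R :=
      ⟨ha.1, ha.2.1, by simpa [mem_closedBall_zero_iff] using hR.le⟩
    have hsub : ((⋂ R', XR R') ×ˢ (Set.univ.pi fun _ => Y) ×ˢ Set.univ) ∩
        (Set.univ ×ˢ Set.univ ×ˢ Metric.ball (0 : Fin m → ℝ) R) ⊆ (⋂ R', XR R') ×ˢ K R := by
      rintro q ⟨⟨hq1, hq2, _⟩, _, _, hq3⟩
      exact ⟨hq1, hq2, Metric.ball_subset_closedBall hq3⟩
    exact (((hcontR R).continuousWithinAt hamem).mono hsub)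

/-- The multiscale mixture
`f = (∏_k χ_{P_k}(y^k)) f₁ + (1 − ∏_k χ_{P_k}(y^k)) f₂` of two Carathéodory
integrands is an admissible integrand. -/
theorem statement9
    (d n m : ℕ) (hd : 0 < d) (hn : 0 < n) (hm : 0 < m)
    (Ω : Set (Fin d → ℝ)) (hΩo : IsOpen Ω) (hΩb : Bornology.IsBounded Ω)
    (P : Fin n → Set (Fin d → ℝ)) (hPm : ∀ k, MeasurableSet (P k))
    (hPc : ∀ k, P k ⊆ unitCell d)
    (f₁ f₂ : (Fin d → ℝ) → (Fin n → Fin d → ℝ) → (Fin m → ℝ) → ℝ)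
    (hf₁0 : ∀ x ∈ Ω, ∀ y ∈ unitCellPow d n, ∀ z, 0 ≤ f₁ x y z)
    (hf₂0 : ∀ x ∈ Ω, ∀ y ∈ unitCellPow d n, ∀ z, 0 ≤ f₂ x y z)
    (hf₁c : ∀ x ∈ Ω,
      ContinuousOn (fun p : (Fin n → Fin d → ℝ) × (Fin m → ℝ) => f₁ x p.1 p.2)
        (unitCellPow d n ×ˢ Set.univ))
    (hf₂c : ∀ x ∈ Ω,
      ContinuousOn (fun p : (Fin n → Fin d → ℝ) × (Fin m → ℝ) => f₂ x p.1 p.2)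
        (unitCellPow d n ×ˢ Set.univ))
    (hf₁m : ∀ y ∈ unitCellPow d n, ∀ z : Fin m → ℝ,
      AEMeasurable (fun x => f₁ x y z) (volume.restrict Ω))
    (hf₂m : ∀ y ∈ unitCellPow d n, ∀ z : Fin m → ℝ,
      AEMeasurable (fun x => f₂ x y z) (volume.restrict Ω)) :
    AdmissibleIntegrand Ω
      (fun x y z =>
        (∏ k, (P k).indicator (fun _ => (1 : ℝ)) (y k)) * f₁ x y z +
          (1 - ∏ k, (P k).indicator (fun _ => (1 : ℝ)) (y k)) * f₂ x y z) := by
  classical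
  intro δ hδ
  have hΩm : MeasurableSet Ω := hΩo.measurableSet
  have hfin : volume Ω ≠ ⊤ := hΩb.measure_lt_top.ne
  have hucfin : volume (unitCell d) ≠ ⊤ := (unitCell_isBounded d).measure_lt_top.ne
  have hηk : ∀ j : ℕ, (ENNReal.ofReal (δ / 2 / 2 ^ (j + 1))) ≠ 0 := fun j => by
    rw [ne_eq, ENNReal.ofReal_eq_zero, not_le]
    positivity
  have hQm : ∀ k : Fin n, MeasurableSet (unitCell d \ P k) := fun k =>
    (unitCell_measurableSet d).diff (hPm k)
  choose A hAsub hAcomp hAmeas using fun k : Fin n =>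
    (hPm k).exists_isCompact_diff_lt
      ((measure_mono (hPc k)).trans_lt hucfin.lt_top).ne (hηk k.val)
  choose B hBsub hBcomp hBmeas using fun k : Fin n =>
    (hQm k).exists_isCompact_diff_lt
      ((measure_mono Set.diff_subset).trans_lt hucfin.lt_top).ne (hηk k.val)
  set Y : Set (Fin d → ℝ) := ⋂ k, (A k ∪ B k) with hYdef
  have k0 : Fin n := ⟨0, hn⟩
  have hYcomp : IsCompact Y :=
    ((hAcomp k0).union (hBcomp k0)).of_isClosed_subset
      (isClosed_iInter fun k => ((hAcomp k).union (hBcomp k)).isClosed)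
      (Set.iInter_subset _ k0)
  have hYsub : Y ⊆ unitCell d :=
    (Set.iInter_subset _ k0).trans (Set.union_subset ((hAsub k0).trans (hPc k0))
      ((hBsub k0).trans Set.diff_subset))
  have hYmeas : volume (unitCell d \ Y) ≤ ENNReal.ofReal δ := by
    have hsub : unitCell d \ Y ⊆
        ⋃ k, ((P k \ A k) ∪ ((unitCell d \ P k) \ B k)) := by
      rintro y ⟨hy, hyY⟩
      simp only [hYdef, Set.mem_iInter, not_forall] at hyY
      obtain ⟨k, hk⟩ := hyY
      rw [Set.mem_union] at hk
      push_neg at hk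
      refine Set.mem_iUnion.mpr ⟨k, ?_⟩
      by_cases hyP : y ∈ P k
      · exact Or.inl ⟨hyP, hk.1⟩
      · exact Or.inr ⟨⟨hy, hyP⟩, hk.2⟩
    calc volume (unitCell d \ Y)
        ≤ ∑' k : Fin n, volume ((P k \ A k) ∪ ((unitCell d \ P k) \ B k)) :=
          (measure_mono hsub).trans (measure_iUnion_le _)
      _ = ∑ k : Fin n, volume ((P k \ A k) ∪ ((unitCell d \ P k) \ B k)) := tsum_fintype _
      _ ≤ ∑ k : Fin n, (ENNReal.ofReal (δ / 2 / 2 ^ ((k : ℕ) + 1)) +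
            ENNReal.ofReal (δ / 2 / 2 ^ ((k : ℕ) + 1))) := by
          refine Finset.sum_le_sum fun k _ => (measure_union_le _ _).trans ?_
          exact add_le_add (hAmeas k).le (hBmeas k).le
      _ = (∑ k : Fin n, ENNReal.ofReal (δ / 2 / 2 ^ ((k : ℕ) + 1))) +
            ∑ k : Fin n, ENNReal.ofReal (δ / 2 / 2 ^ ((k : ℕ) + 1)) :=
          Finset.sum_add_distrib
      _ ≤ ENNReal.ofReal (δ / 2) + ENNReal.ofReal (δ / 2) := by
          have h1 : ∑ k : Fin n, ENNReal.ofReal (δ / 2 / 2 ^ ((k : ℕ) + 1)) ≤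
              ENNReal.ofReal (δ / 2) := by
            rw [Fin.sum_univ_eq_sum_range fun j => ENNReal.ofReal (δ / 2 / 2 ^ (j + 1))]
            exact (ENNReal.sum_le_tsum _).trans (ofReal_geom_aux (by positivity))
          exact add_le_add h1 h1
      _ = ENNReal.ofReal δ := by
          rw [← ENNReal.ofReal_add (by positivity) (by positivity)]
          norm_num
  have hind : ∀ k, ContinuousOn (fun y : Fin d → ℝ =>
      (P k).indicator (fun _ => (1 : ℝ)) y) Y := by
    intro k
    have hcont : ContinuousOn (fun y : Fin d → ℝ => (P k).indicator (fun _ => (1 : ℝ)) y)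
        (⋃ b ∈ (Finset.univ : Finset Bool), (if b then A k else B k)) := by
      refine continuousOn_of_piecewise_const Finset.univ _ ?_ _
        (fun b => if b then (1 : ℝ) else 0) ?_ ?_
      · rintro (_ | _) _ <;> simp [(hAcomp k).isClosed, (hBcomp k).isClosed]
      · rintro (_ | _) _ x hx
        · simp only [if_neg Bool.false_ne_true] at hx ⊢
          exact Set.indicator_of_notMem ((hBsub k) hx).2 _
        · simp only [if_pos rfl] at hx ⊢
          exact Set.indicator_of_mem ((hAsub k) hx) _
      · rintro (_ | _) _ (_ | _) _ hbb <;> simp_all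
        · exact Set.eq_empty_of_forall_notMem fun x hx => ((hBsub k) hx.1).2 ((hAsub k) hx.2)
        · exact Set.eq_empty_of_forall_notMem fun x hx => ((hBsub k) hx.2).2 ((hAsub k) hx.1)
    refine hcont.mono ?_
    intro y hy
    have := Set.mem_iInter.mp hy k
    simp only [Finset.mem_univ, Set.iUnion_true]
    rw [Set.mem_union] at this
    rcases this with h | h
    · exact Set.mem_iUnion.mpr ⟨true, by simpa using h⟩
    · exact Set.mem_iUnion.mpr ⟨false, by simpa using h⟩
  obtain ⟨X₁, hX₁c, hX₁sub, hX₁meas, hX₁cont⟩ :=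
    scorza_dragoni hΩm hfin hYcomp hYsub hf₁c hf₁m (half_pos hδ)
  obtain ⟨X₂, hX₂c, hX₂sub, hX₂meas, hX₂cont⟩ :=
    scorza_dragoni hΩm hfin hYcomp hYsub hf₂c hf₂m (half_pos hδ)
  refine ⟨X₁ ∩ X₂, hX₁c.inter_right hX₂c.isClosed, Set.inter_subset_left.trans hX₁sub, ?_,
    Y, hYcomp, hYsub, hYmeas, ?_⟩
  · have : Ω \ (X₁ ∩ X₂) = (Ω \ X₁) ∪ (Ω \ X₂) := by
      rw [Set.diff_inter]
    rw [this]
    calc volume ((Ω \ X₁) ∪ (Ω \ X₂)) ≤ volume (Ω \ X₁) + volume (Ω \ X₂) :=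
          measure_union_le _ _
      _ ≤ ENNReal.ofReal (δ / 2) + ENNReal.ofReal (δ / 2) := add_le_add hX₁meas hX₂meas
      _ = ENNReal.ofReal δ := by
          rw [← ENNReal.ofReal_add (by positivity) (by positivity)]
          norm_num
  · set T : Set ((Fin d → ℝ) × (Fin n → Fin d → ℝ) × (Fin m → ℝ)) :=
      (X₁ ∩ X₂) ×ˢ (Set.univ.pi fun _ => Y) ×ˢ Set.univ with hTdef
    have hprod : ContinuousOn (fun p : (Fin d → ℝ) × (Fin n → Fin d → ℝ) × (Fin m → ℝ) =>
        ∏ k, (P k).indicator (fun _ => (1 : ℝ)) (p.2.1 k)) T := by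
      apply continuousOn_finset_prod
      intro k _
      refine (hind k).comp (((continuous_apply k).comp
        (continuous_fst.comp continuous_snd)).continuousOn) ?_
      rintro p ⟨_, hp2, _⟩
      exact hp2 k (Set.mem_univ k)
    have h1 : ContinuousOn (fun p : (Fin d → ℝ) × (Fin n → Fin d → ℝ) × (Fin m → ℝ) =>
        f₁ p.1 p.2.1 p.2.2) T :=
      hX₁cont.mono (Set.prod_mono Set.inter_subset_left subset_rfl)
    have h2 : ContinuousOn (fun p : (Fin d → ℝ) × (Fin n → Fin d → ℝ) × (Fin m → ℝ) =>
        f₂ p.1 p.2.1 p.2.2) T :=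
      hX₂cont.mono (Set.prod_mono Set.inter_subset_right subset_rfl)
    exact (hprod.mul h1).add ((continuousOn_const.sub hprod).mul h2)
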